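/- Let a ∈ ℝ ∪ {−∞} and let φ : (a,∞) → ℝ be smooth with φ'(t) > 0 and φ''(t) ≥ 0 for all t, and assume φ' has at most linear growth: there exist c > 0 and K > max(a,0) such that φ'(t) ≤ c·t for all t ≥ K. Let r₀ ≥ 0 and let u : [r₀, ω₊) → (a,∞) be a C² solution of the rotational [φ,e₃]-minimal equation u''(r) = (1 + u'(r)²)·(φ'(u(r)) − u'(r)/r) on (r₀, ω₊), maximal to the right, satisfying u'(r) > 0 and u'(r) < r·φ'(u(r)) for all r ∈ (r₀, ω₊). Then ω₊ = +∞. -/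

import Mathlib

open Set Filter
open scoped ENNReal Topology

/-- The interval `[r₀, ω)` (all of `[r₀,∞)` when `ω = ∞`). -/
def DomFrom (r₀ : ℝ) (ω : ℝ≥0∞) : Set ℝ := {r : ℝ | r₀ ≤ r ∧ ENNReal.ofReal r < ω}

private lemma hdA_fst {f : ℝ → ℝ × ℝ × ℝ} {p : ℝ × ℝ × ℝ} {t : ℝ}
    (h : HasDerivAt f p t) : HasDerivAt (fun s => (f s).1) p.1 t := by
  exact (ContinuousLinearMap.fst ℝ ℝ (ℝ × ℝ)).hasFDerivAt.comp_hasDerivAt t h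

private lemma hdA_snd1 {f : ℝ → ℝ × ℝ × ℝ} {p : ℝ × ℝ × ℝ} {t : ℝ}
    (h : HasDerivAt f p t) : HasDerivAt (fun s => (f s).2.1) p.2.1 t := by
  exact (ContinuousLinearMap.fst ℝ ℝ ℝ).hasFDerivAt.comp_hasDerivAt t
    ((ContinuousLinearMap.snd ℝ ℝ (ℝ × ℝ)).hasFDerivAt.comp_hasDerivAt t h)

private lemma hdA_snd2 {f : ℝ → ℝ × ℝ × ℝ} {p : ℝ × ℝ × ℝ} {t : ℝ}
    (h : HasDerivAt f p t) : HasDerivAt (fun s => (f s).2.2) p.2.2 t := by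
  exact (ContinuousLinearMap.snd ℝ ℝ ℝ).hasFDerivAt.comp_hasDerivAt t
    ((ContinuousLinearMap.snd ℝ ℝ (ℝ × ℝ)).hasFDerivAt.comp_hasDerivAt t h)

private lemma gronwallBound_mono_x {δ k ε : ℝ} (hδ : 0 ≤ δ) (hk : 0 < k) (hε : 0 ≤ ε)
    {x y : ℝ} (h : x ≤ y) : gronwallBound δ k ε x ≤ gronwallBound δ k ε y := by
  rw [gronwallBound_of_K_ne_0 hk.ne']
  have hexp : Real.exp (k * x) ≤ Real.exp (k * y) :=
    Real.exp_le_exp.2 (by nlinarith)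
  have h1 : 0 ≤ ε / k := div_nonneg hε hk.le
  nlinarith [Real.exp_pos (k * x)]

set_option maxHeartbeats 2000000 in
private lemma extend_sol
    (φ' : ℝ → ℝ) (S : Set ℝ) (hSo : IsOpen S) (hSup : ∀ ⦃s t : ℝ⦄, s ∈ S → s ≤ t → t ∈ S)
    (hφ'C : ContDiffOn ℝ 1 φ' S)
    (hφ'pos : ∀ t ∈ S, 0 < φ' t) (hφ'mono : ∀ s ∈ S, ∀ t, s ≤ t → φ' s ≤ φ' t)
    (c K : ℝ) (hc : 0 < c) (hKS : K ∈ S) (hK0 : 0 < K) (hlin : ∀ t, K ≤ t → φ' t ≤ c * t)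
    (r₀ b : ℝ) (hr₀ : 0 ≤ r₀) (hb : r₀ < b)
    (u u' : ℝ → ℝ)
    (hmem : ∀ r ∈ Ico r₀ b, u r ∈ S)
    (hd : ∀ r ∈ Ico r₀ b, HasDerivWithinAt u (u' r) (Ico r₀ b) r)
    (hu'c : ContinuousOn u' (Ico r₀ b))
    (heq : ∀ r ∈ Ioo r₀ b, HasDerivAt u' ((1 + u' r ^ 2) * (φ' (u r) - u' r / r)) r)
    (hu'pos : ∀ r ∈ Ioo r₀ b, 0 < u' r)
    (hu'lt : ∀ r ∈ Ioo r₀ b, u' r < r * φ' (u r)) :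
    ∃ b' > b, ∃ v v' : ℝ → ℝ,
      v r₀ = u r₀ ∧ v' r₀ = u' r₀ ∧
      (∀ r ∈ Ico r₀ b', v r ∈ S) ∧
      (∀ r ∈ Ico r₀ b', HasDerivWithinAt v (v' r) (Ico r₀ b') r) ∧
      ContinuousOn v' (Ico r₀ b') ∧
      (∀ r ∈ Ioo r₀ b', HasDerivAt v' ((1 + v' r ^ 2) * (φ' (v r) - v' r / r)) r) := by
  have hb0 : 0 < b := lt_of_le_of_lt hr₀ hb
  have hr₀mem : r₀ ∈ Ico r₀ b := ⟨le_refl _, hb⟩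
  -- continuity of u
  have ucont : ContinuousOn u (Ico r₀ b) := fun r hr => (hd r hr).continuousWithinAt
  -- interior derivatives of u
  have hdi : ∀ r ∈ Ioo r₀ b, HasDerivAt u (u' r) r := by
    intro r hr
    exact (hd r (Ioo_subset_Ico_self hr)).hasDerivAt (Ico_mem_nhds_iff.2 hr)
  -- u is monotone
  have umono : MonotoneOn u (Ico r₀ b) := by
    apply monotoneOn_of_deriv_nonneg (convex_Ico _ _) ucont
    · intro x hx
      rw [interior_Ico] at hx
      exact (hdi x hx).differentiableAt.differentiableWithinAt
    · intro x hx
      rw [interior_Ico] at hx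
      rw [(hdi x hx).deriv]
      exact (hu'pos x hx).le
  have umem0 : u r₀ ∈ S := hmem r₀ hr₀mem
  have hulb : ∀ r ∈ Ico r₀ b, u r₀ ≤ u r := fun r hr => umono hr₀mem hr hr.1
  -- pointwise bound on φ' (u r)
  have hφub : ∀ r ∈ Ico r₀ b, φ' (u r) ≤ c * (K + ‖u r‖) := by
    intro r hr
    rcases le_or_gt K (u r) with h | h
    · calc φ' (u r) ≤ c * u r := hlin _ h
        _ ≤ c * (K + ‖u r‖) := by
            have : u r ≤ ‖u r‖ := le_abs_self _
            nlinarith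
    · calc φ' (u r) ≤ φ' K := hφ'mono _ (hmem r hr) _ h.le
        _ ≤ c * K := hlin _ le_rfl
        _ ≤ c * (K + ‖u r‖) := by
            have : (0:ℝ) ≤ ‖u r‖ := norm_nonneg _
            nlinarith
  set CC : ℝ := b * c with hCC
  set ε : ℝ := b * c * K with hε
  have hCC0 : 0 < CC := mul_pos hb0 hc
  have hε0 : 0 < ε := mul_pos hCC0 hK0
  -- pointwise bound on u'
  have hu'bd : ∀ r ∈ Ico r₀ b, 0 ≤ u' r ∧ u' r ≤ CC * ‖u r‖ + ε := by
    have hIoo : ∀ r ∈ Ioo r₀ b, 0 ≤ u' r ∧ u' r ≤ CC * ‖u r‖ + ε := by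
      intro r hr
      refine ⟨(hu'pos r hr).le, ?_⟩
      have h1 : u' r ≤ r * φ' (u r) := (hu'lt r hr).le
      have h2 : φ' (u r) ≤ c * (K + ‖u r‖) := hφub r (Ioo_subset_Ico_self hr)
      have h3 : 0 < φ' (u r) := hφ'pos _ (hmem r (Ioo_subset_Ico_self hr))
      have h4 : r ≤ b := hr.2.le
      have h5 : 0 < r := lt_of_le_of_lt hr₀ hr.1
      have : r * φ' (u r) ≤ b * (c * (K + ‖u r‖)) := by nlinarith
      rw [hCC, hε]; nlinarith
    intro r hr
    rcases eq_or_lt_of_le hr.1 with h | h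
    · rw [← h]
      have hne : (𝓝[Ioo r₀ b] r₀).NeBot := left_nhdsWithin_Ioo_neBot hb
      have hmemev : ∀ᶠ x in 𝓝[Ioo r₀ b] r₀, x ∈ Ioo r₀ b := eventually_mem_nhdsWithin
      have htu' : Tendsto u' (𝓝[Ioo r₀ b] r₀) (𝓝 (u' r₀)) :=
        (hu'c r₀ hr₀mem).mono_left (nhdsWithin_mono _ Ioo_subset_Ico_self)
      have htu : Tendsto u (𝓝[Ioo r₀ b] r₀) (𝓝 (u r₀)) :=
        (ucont r₀ hr₀mem).mono_left (nhdsWithin_mono _ Ioo_subset_Ico_self)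
      constructor
      · exact ge_of_tendsto htu' (hmemev.mono fun x hx => (hIoo x hx).1)
      · have htR : Tendsto (fun x => CC * ‖u x‖ + ε) (𝓝[Ioo r₀ b] r₀)
            (𝓝 (CC * ‖u r₀‖ + ε)) := ((htu.norm.const_mul CC).add tendsto_const_nhds)
        exact le_of_tendsto_of_tendsto htu' htR
          (hmemev.mono fun x hx => (hIoo x hx).2)
    · exact hIoo r ⟨h, hr.2⟩
  -- Grönwall
  set δ : ℝ := ‖u r₀‖ with hδ
  set U : ℝ := gronwallBound δ CC ε (b - r₀) with hU
  have hUbd : ∀ r ∈ Ico r₀ b, ‖u r‖ ≤ U := by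
    intro r hr
    have hG := norm_le_gronwallBound_of_norm_deriv_right_le
      (f := u) (f' := u') (δ := δ) (K := CC) (ε := ε) (a := r₀) (b := r)
      (ucont.mono (fun x hx => ⟨hx.1, lt_of_le_of_lt hx.2 hr.2⟩))
      (fun x hx => by
        have hx' : x ∈ Ico r₀ b := ⟨hx.1, lt_of_lt_of_le hx.2 hr.2.le⟩
        refine (hd x hx').mono_of_mem_nhdsWithin ?_
        have h1 : Ici x ∩ Iio b ∈ 𝓝[Ici x] x :=
          inter_mem_nhdsWithin _ (Iio_mem_nhds hx'.2)
        exact mem_of_superset h1 (fun y hy => ⟨le_trans hx'.1 hy.1, hy.2⟩))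
      le_rfl
      (fun x hx => by
        have hx' : x ∈ Ico r₀ b := ⟨hx.1, lt_of_lt_of_le hx.2 hr.2.le⟩
        have := hu'bd x hx'
        rw [Real.norm_of_nonneg this.1]
        exact this.2)
      r ⟨hr.1, le_rfl⟩
    exact le_trans hG (gronwallBound_mono_x (norm_nonneg _) hCC0 hε0.le
      (by linarith [hr.2]))
  have hU0 : 0 ≤ U := le_trans (norm_nonneg _) (hUbd r₀ hr₀mem)
  set M : ℝ := CC * U + ε with hM
  have hM0 : 0 < M := by positivity
  have hu'M : ∀ r ∈ Ico r₀ b, ‖u' r‖ ≤ M := by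
    intro r hr
    have h := hu'bd r hr
    rw [Real.norm_of_nonneg h.1]
    calc u' r ≤ CC * ‖u r‖ + ε := h.2
      _ ≤ CC * U + ε := by nlinarith [hUbd r hr]
  -- u is Lipschitz on Ico r₀ b
  have ulip : LipschitzOnWith M.toNNReal u (Ico r₀ b) := by
    apply Convex.lipschitzOnWith_of_nnnorm_hasDerivWithin_le (f' := u') (convex_Ico _ _) hd
    intro x hx
    rw [← NNReal.coe_le_coe, coe_nnnorm, Real.coe_toNNReal _ hM0.le]
    exact hu'M x hx
  -- the midpoint s₀
  set m : ℝ := max r₀ (b / 2) with hm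
  set s₀ : ℝ := (m + b) / 2 with hs₀
  have hmb : m < b := max_lt hb (by linarith)
  have hms₀ : m < s₀ := by rw [hs₀]; linarith
  have hs₀b : s₀ < b := by rw [hs₀]; linarith
  have hs₀r₀ : r₀ < s₀ := lt_of_le_of_lt (le_max_left _ _) hms₀
  have hs₀0 : 0 < s₀ := lt_of_lt_of_le (by linarith : (0:ℝ) < b/2)
    (le_trans (le_max_right _ _) hms₀.le)
  have hsub : Ico s₀ b ⊆ Ico r₀ b := fun x hx => ⟨le_trans hs₀r₀.le hx.1, hx.2⟩
  have hsubo : Ico s₀ b ⊆ Ioo r₀ b := fun x hx => ⟨lt_of_lt_of_le hs₀r₀ hx.1, hx.2⟩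
  -- bound on u''
  set M₂ : ℝ := (1 + M ^ 2) * (c * (K + U) + M / s₀) with hM₂
  have hM₂0 : 0 ≤ M₂ := by positivity
  have hu''bd : ∀ x ∈ Ico s₀ b, ‖(1 + u' x ^ 2) * (φ' (u x) - u' x / x)‖ ≤ M₂ := by
    intro x hx
    have hx' := hsub hx
    have hxo := hsubo hx
    have h1 : 0 ≤ u' x := (hu'bd x hx').1
    have h2 : ‖u' x‖ ≤ M := hu'M x hx'
    rw [Real.norm_of_nonneg h1] at h2
    have h3 : 0 < φ' (u x) := hφ'pos _ (hmem x hx')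
    have h4 : φ' (u x) ≤ c * (K + ‖u x‖) := hφub x hx'
    have h5 : ‖u x‖ ≤ U := hUbd x hx'
    have h6 : φ' (u x) ≤ c * (K + U) := by nlinarith
    have h7 : 0 < x := lt_of_lt_of_le hs₀0 hx.1
    have h8 : 0 ≤ u' x / x := div_nonneg h1 h7.le
    have h9 : u' x / x ≤ M / s₀ := div_le_div₀ hM0.le h2 hs₀0 hx.1
    have h10 : ‖φ' (u x) - u' x / x‖ ≤ c * (K + U) + M / s₀ := by
      rw [Real.norm_eq_abs, abs_sub_le_iff]
      constructor
      · nlinarith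
      · nlinarith
    rw [norm_mul]
    have h11 : ‖1 + u' x ^ 2‖ ≤ 1 + M ^ 2 := by
      rw [Real.norm_of_nonneg (by positivity)]
      nlinarith
    have h12 : (0:ℝ) ≤ c * (K + U) + M / s₀ := by positivity
    calc ‖1 + u' x ^ 2‖ * ‖φ' (u x) - u' x / x‖ ≤ (1 + M ^ 2) * (c * (K + U) + M / s₀) := by
          apply mul_le_mul h11 h10 (norm_nonneg _) (by positivity)
      _ = M₂ := rfl
  -- u' is Lipschitz on Ico s₀ b
  have u'lip : LipschitzOnWith M₂.toNNReal u' (Ico s₀ b) := by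
    apply Convex.lipschitzOnWith_of_nnnorm_hasDerivWithin_le
      (f' := fun x => (1 + u' x ^ 2) * (φ' (u x) - u' x / x)) (convex_Ico _ _)
    · intro x hx
      exact (heq x (hsubo hx)).hasDerivWithinAt
    · intro x hx
      rw [← NNReal.coe_le_coe, coe_nnnorm, Real.coe_toNNReal _ hM₂0]
      exact hu''bd x hx
  -- extensions
  obtain ⟨g, hglip, hgeq⟩ := ulip.extend_real
  obtain ⟨g', hg'lip, hg'eq⟩ := u'lip.extend_real
  set ub : ℝ := g b with hub
  set u'b : ℝ := g' b with hu'b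
  -- eventual equality near b from the left
  have hevu : u =ᶠ[𝓝[<] b] g := by
    filter_upwards [Ioo_mem_nhdsLT_of_mem (⟨hb, le_refl b⟩ : b ∈ Ioc r₀ b)] with x hx
    exact hgeq (Ioo_subset_Ico_self hx)
  have hevu' : u' =ᶠ[𝓝[<] b] g' := by
    filter_upwards [Ioo_mem_nhdsLT_of_mem (⟨hs₀b, le_refl b⟩ : b ∈ Ioc s₀ b)] with x hx
    exact hg'eq (Ioo_subset_Ico_self hx)
  have hutb : Tendsto u (𝓝[<] b) (𝓝 ub) :=
    ((hglip.continuous.tendsto b).mono_left nhdsWithin_le_nhds).congr'  hevu.symm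
  have hu'tb : Tendsto u' (𝓝[<] b) (𝓝 u'b) :=
    ((hg'lip.continuous.tendsto b).mono_left nhdsWithin_le_nhds).congr' hevu'.symm
  have hnbb : (𝓝[<] b).NeBot := by
    exact nhdsLT_neBot b
  have hubS : ub ∈ S := by
    have : u r₀ ≤ ub := by
      apply ge_of_tendsto hutb
      filter_upwards [Ioo_mem_nhdsLT_of_mem (⟨hb, le_refl b⟩ : b ∈ Ioc r₀ b)] with x hx
      exact hulb x (Ioo_subset_Ico_self hx)
    exact hSup umem0 this
  have hu'b0 : 0 ≤ u'b := by
    apply ge_of_tendsto hu'tb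
    filter_upwards [Ioo_mem_nhdsLT_of_mem (⟨hb, le_refl b⟩ : b ∈ Ioc r₀ b)] with x hx
    exact (hu'bd x (Ioo_subset_Ico_self hx)).1
  -- the vector field for the first-order system
  set F : ℝ × ℝ × ℝ → ℝ × ℝ × ℝ :=
    fun p => ((1:ℝ), p.2.2, (1 + p.2.2 ^ 2) * (φ' p.2.1 - p.2.2 / p.1)) with hF
  have hyC : ContDiffAt ℝ 1 (fun p : ℝ × ℝ × ℝ => p.2.2) (b, ub, u'b) :=
    (contDiff_snd.comp contDiff_snd).contDiffAt
  have hxC : ContDiffAt ℝ 1 (fun p : ℝ × ℝ × ℝ => p.2.1) (b, ub, u'b) :=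
    (contDiff_fst.comp contDiff_snd).contDiffAt
  have htC : ContDiffAt ℝ 1 (fun p : ℝ × ℝ × ℝ => p.1) (b, ub, u'b) :=
    contDiff_fst.contDiffAt
  have hφat : ContDiffAt ℝ 1 φ' ub := hφ'C.contDiffAt (hSo.mem_nhds hubS)
  have hFC : ContDiffAt ℝ 1 F (b, ub, u'b) := by
    refine ContDiffAt.prodMk contDiffAt_const (hyC.prodMk ?_)
    refine ((ContDiffAt.add contDiffAt_const (hyC.pow 2)).mul ?_)
    refine ContDiffAt.sub ?_ ?_
    · exact ContDiffAt.comp (f := fun p : ℝ × ℝ × ℝ => p.2.1) (b, ub, u'b) hφat hxC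
    · exact hyC.div htC hb0.ne'
  obtain ⟨f, hf0, ε', hε'0, hode⟩ := hFC.exists_forall_mem_closedBall_exists_eq_forall_mem_Ioo_hasDerivAt₀ b
  set f₁ : ℝ → ℝ := fun t => (f t).1 with hf₁
  set f₂ : ℝ → ℝ := fun t => (f t).2.1 with hf₂
  set f₃ : ℝ → ℝ := fun t => (f t).2.2 with hf₃
  have hbI : b ∈ Ioo (b - ε') (b + ε') := ⟨by linarith, by linarith⟩
  have hf₁d : ∀ t ∈ Ioo (b - ε') (b + ε'), HasDerivAt f₁ 1 t := fun t ht => by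
    simpa using hdA_fst (hode t ht)
  have hf₁b : f₁ b = b := by rw [show f₁ b = (f b).1 from rfl, hf0]
  have hf₂b : f₂ b = ub := by rw [show f₂ b = (f b).2.1 from rfl, hf0]
  have hf₃b : f₃ b = u'b := by rw [show f₃ b = (f b).2.2 from rfl, hf0]
  have hf₁eq : ∀ t ∈ Ioo (b - ε') (b + ε'), f₁ t = t := by
    have hconst : ∀ t ∈ Ioo (b - ε') (b + ε'), f₁ t - t = f₁ b - b := by
      intro t ht
      apply (convex_Ioo _ _).is_const_of_fderivWithin_eq_zero (𝕜 := ℝ)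
        (f := fun t => f₁ t - t) ?_ ?_ ht hbI
      · intro x hx
        exact ((hf₁d x hx).sub (hasDerivAt_id x)).differentiableAt.differentiableWithinAt
      · intro x hx
        rw [fderivWithin_of_isOpen isOpen_Ioo hx]
        have h0 : HasDerivAt (fun t => f₁ t - t) 0 x := by
          have h0' := (hf₁d x hx).sub (hasDerivAt_id x)
          rw [sub_self] at h0'
          exact h0'
        have := h0.hasFDerivAt.fderiv
        rw [this]
        ext y
        simp
    intro t ht
    have := hconst t ht
    rw [hf₁b] at this
    linarith [this]
  have hf₂d : ∀ t ∈ Ioo (b - ε') (b + ε'), HasDerivAt f₂ (f₃ t) t := fun t ht => by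
    simpa using hdA_snd1 (hode t ht)
  have hf₃d : ∀ t ∈ Ioo (b - ε') (b + ε'),
      HasDerivAt f₃ ((1 + f₃ t ^ 2) * (φ' (f₂ t) - f₃ t / t)) t := by
    intro t ht
    have h := hdA_snd2 (hode t ht)
    simp only [hF] at h
    have ht1 : (f t).1 = t := hf₁eq t ht
    rw [ht1] at h
    exact h
  -- choose b'
  have hf₂cont : ContinuousAt f₂ b := (hf₂d b hbI).continuousAt
  have hf₂S : ∀ᶠ x in 𝓝 b, f₂ x ∈ S := hf₂cont (hSo.mem_nhds (by rwa [hf₂b]))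
  obtain ⟨δ₂, hδ₂0, hδ₂⟩ := Metric.eventually_nhds_iff.1 hf₂S
  set e : ℝ := min (ε' / 2) (δ₂ / 2) with he
  have he0 : 0 < e := lt_min (by linarith) (by linarith)
  set b' : ℝ := b + e with hb'
  have hbb' : b < b' := by rw [hb']; linarith
  have hb'ε : b' < b + ε' := by
    rw [hb', he]; have := min_le_left (ε' / 2) (δ₂ / 2); linarith
  have hIccsub : Icc b b' ⊆ Ioo (b - ε') (b + ε') := fun x hx =>
    ⟨by linarith [hx.1], by linarith [hx.2]⟩
  have hf₂mem : ∀ x ∈ Icc b b', f₂ x ∈ S := by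
    intro x hx
    apply hδ₂
    rw [Real.dist_eq, abs_of_nonneg (by linarith [hx.1])]
    have := min_le_right (ε' / 2) (δ₂ / 2)
    rw [hb', he] at hx
    cases hx with
    | intro h1 h2 => linarith [h2]
  -- the glued solution
  set V : ℝ → ℝ := fun r => if r < b then u r else f₂ r with hV
  set V' : ℝ → ℝ := fun r => if r < b then u' r else f₃ r with hV'def
  have hVu : ∀ x, x < b → V x = u x := fun x hx => if_pos hx
  have hVf : ∀ x, b ≤ x → V x = f₂ x := fun x hx => if_neg (not_lt.2 hx)
  have hV'u : ∀ x, x < b → V' x = u' x := fun x hx => if_pos hx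
  have hV'f : ∀ x, b ≤ x → V' x = f₃ x := fun x hx => if_neg (not_lt.2 hx)
  have hVb : V b = ub := by rw [hVf b le_rfl, hf₂b]
  have hV'b : V' b = u'b := by rw [hV'f b le_rfl, hf₃b]
  have hVevu : ∀ x, x < b → V =ᶠ[𝓝 x] u := by
    intro x hx
    filter_upwards [Iio_mem_nhds hx] with y hy using hVu y hy
  have hV'evu : ∀ x, x < b → V' =ᶠ[𝓝 x] u' := by
    intro x hx
    filter_upwards [Iio_mem_nhds hx] with y hy using hV'u y hy
  have hVevf : ∀ x, b < x → V =ᶠ[𝓝 x] f₂ := by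
    intro x hx
    filter_upwards [Ioi_mem_nhds hx] with y hy using hVf y (le_of_lt hy)
  have hV'evf : ∀ x, b < x → V' =ᶠ[𝓝 x] f₃ := by
    intro x hx
    filter_upwards [Ioi_mem_nhds hx] with y hy using hV'f y (le_of_lt hy)
  have hIoomem : Ioo r₀ b ∈ 𝓝[<] b := Ioo_mem_nhdsLT_of_mem ⟨hb, le_refl b⟩
  have hIoomem' : Ioo s₀ b ∈ 𝓝[<] b := Ioo_mem_nhdsLT_of_mem ⟨hs₀b, le_refl b⟩
  -- V has left derivative u'b at b
  have hVIic : HasDerivWithinAt V u'b (Iic b) b := by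
    apply hasDerivWithinAt_Iic_of_tendsto_deriv (s := Ioo r₀ b)
    · intro x hx
      exact ((hdi x hx).congr_of_eventuallyEq (hVevu x hx.2)).differentiableAt.differentiableWithinAt
    · have h1 : Tendsto u (𝓝[Ioo r₀ b] b) (𝓝 ub) :=
        hutb.mono_left (nhdsWithin_mono _ Ioo_subset_Iio_self)
      have h2 : Tendsto V (𝓝[Ioo r₀ b] b) (𝓝 ub) :=
        Tendsto.congr' (eventually_mem_nhdsWithin.mono fun y hy => (hVu y hy.2).symm) h1
      rw [ContinuousWithinAt, hVb]
      exact h2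
    · exact hIoomem
    · have hev : deriv V =ᶠ[𝓝[<] b] u' := by
        filter_upwards [hIoomem] with x hx
        exact ((hdi x hx).congr_of_eventuallyEq (hVevu x hx.2)).deriv
      exact Tendsto.congr' hev.symm hu'tb
  have hVIci : HasDerivWithinAt V u'b (Ici b) b := by
    have h := ((hf₂d b hbI).hasDerivWithinAt (s := Ici b)).congr
      (fun y hy => hVf y hy) (hVf b le_rfl)
    rwa [hf₃b] at h
  have hVatb : HasDerivAt V u'b b := by
    have h := hVIic.union hVIci
    rw [Iic_union_Ici] at h
    rwa [hasDerivWithinAt_univ] at h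
  -- V' has two-sided derivative L at b
  set L : ℝ := (1 + u'b ^ 2) * (φ' ub - u'b / b) with hL
  have htL : Tendsto (fun x => (1 + u' x ^ 2) * (φ' (u x) - u' x / x)) (𝓝[<] b) (𝓝 L) := by
    have h1 : Tendsto (fun x => φ' (u x)) (𝓝[<] b) (𝓝 (φ' ub)) :=
      ((hφ'C.continuousOn.continuousAt (hSo.mem_nhds hubS)).tendsto).comp hutb
    have h2 : Tendsto (fun x : ℝ => x) (𝓝[<] b) (𝓝 b) :=
      tendsto_id.mono_left nhdsWithin_le_nhds
    exact (tendsto_const_nhds.add (hu'tb.pow 2)).mul (h1.sub (hu'tb.div h2 hb0.ne'))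
  have hV'Iic : HasDerivWithinAt V' L (Iic b) b := by
    apply hasDerivWithinAt_Iic_of_tendsto_deriv (s := Ioo s₀ b)
    · intro x hx
      have hx' : x ∈ Ioo r₀ b := hsubo ⟨hx.1.le, hx.2⟩
      exact ((heq x hx').congr_of_eventuallyEq
        (hV'evu x hx.2)).differentiableAt.differentiableWithinAt
    · have h1 : Tendsto u' (𝓝[Ioo s₀ b] b) (𝓝 u'b) :=
        hu'tb.mono_left (nhdsWithin_mono _ Ioo_subset_Iio_self)
      have h2 : Tendsto V' (𝓝[Ioo s₀ b] b) (𝓝 u'b) :=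
        Tendsto.congr' (eventually_mem_nhdsWithin.mono fun y hy => (hV'u y hy.2).symm) h1
      rw [ContinuousWithinAt, hV'b]
      exact h2
    · exact hIoomem'
    · have hev : deriv V' =ᶠ[𝓝[<] b]
          (fun x => (1 + u' x ^ 2) * (φ' (u x) - u' x / x)) := by
        filter_upwards [hIoomem] with x hx
        exact ((heq x hx).congr_of_eventuallyEq (hV'evu x hx.2)).deriv
      exact Tendsto.congr' hev.symm htL
  have hV'Ici : HasDerivWithinAt V' L (Ici b) b := by
    have h0 := hf₃d b hbI
    rw [hf₂b, hf₃b] at h0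
    exact (h0.hasDerivWithinAt (s := Ici b)).congr (fun y hy => hV'f y hy) (hV'f b le_rfl)
  have hV'atb : HasDerivAt V' L b := by
    have h := hV'Iic.union hV'Ici
    rw [Iic_union_Ici] at h
    rwa [hasDerivWithinAt_univ] at h
  -- assemble
  refine ⟨b', hbb', V, V', hVu r₀ hb, hV'u r₀ hb, ?_, ?_, ?_, ?_⟩
  · intro r hr
    rcases lt_or_ge r b with h | h
    · rw [hVu r h]; exact hmem r ⟨hr.1, h⟩
    · rw [hVf r h]; exact hf₂mem r ⟨h, hr.2.le⟩
  · intro r hr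
    rcases lt_trichotomy r b with h | h | h
    · have hmem' : Ico r₀ b ∈ 𝓝[Ico r₀ b'] r := by
        refine mem_of_superset (inter_mem_nhdsWithin _ (Iio_mem_nhds h)) ?_
        exact fun y hy => ⟨hy.1.1, hy.2⟩
      rw [hV'u r h]
      exact (((hd r ⟨hr.1, h⟩).congr (fun y hy => hVu y hy.2) (hVu r h)).mono_of_mem_nhdsWithin
        hmem')
    · subst h
      rw [hV'b]
      exact hVatb.hasDerivWithinAt
    · rw [hV'f r h.le]
      exact ((hf₂d r (hIccsub ⟨h.le, hr.2.le⟩)).congr_of_eventuallyEq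
        (hVevf r h)).hasDerivWithinAt
  · intro r hr
    rcases lt_trichotomy r b with h | h | h
    · have hmem' : Ico r₀ b ∈ 𝓝[Ico r₀ b'] r := by
        refine mem_of_superset (inter_mem_nhdsWithin _ (Iio_mem_nhds h)) ?_
        exact fun y hy => ⟨hy.1.1, hy.2⟩
      have h1 : ContinuousWithinAt u' (Ico r₀ b') r :=
        (hu'c r ⟨hr.1, h⟩).mono_of_mem_nhdsWithin hmem'
      apply h1.congr_of_eventuallyEq ?_ (hV'u r h)
      filter_upwards [mem_nhdsWithin_of_mem_nhds (Iio_mem_nhds h)] with y hy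
      exact hV'u y hy
    · subst h
      apply ContinuousAt.continuousWithinAt
      rw [ContinuousAt, ← nhdsLT_sup_nhdsGE r, tendsto_sup, hV'b]
      constructor
      · exact Tendsto.congr'
          (by filter_upwards [self_mem_nhdsWithin] with y hy; exact (hV'u y hy).symm) hu'tb
      · have h1 : Tendsto f₃ (𝓝[≥] r) (𝓝 u'b) := by
          have := (hf₃d r hbI).continuousAt
          rw [ContinuousAt, hf₃b] at this
          exact this.mono_left nhdsWithin_le_nhds
        exact Tendsto.congr'
          (by filter_upwards [self_mem_nhdsWithin] with y hy; exact (hV'f y hy).symm) h1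
    · apply ContinuousAt.continuousWithinAt
      exact ((hf₃d r (hIccsub ⟨h.le, hr.2.le⟩)).continuousAt).congr (hV'evf r h).symm
  · intro r hr
    rcases lt_trichotomy r b with h | h | h
    · rw [hV'u r h, hVu r h]
      exact (heq r ⟨hr.1, h⟩).congr_of_eventuallyEq (hV'evu r h)
    · subst h
      rw [hV'b, hVb]
      exact hV'atb
    · rw [hV'f r h.le, hVf r h.le]
      exact (hf₃d r (hIccsub ⟨h.le, hr.2.le⟩)).congr_of_eventuallyEq (hV'evf r h)

private lemma DomFrom_eq {r₀ b : ℝ} (hb : 0 < b) :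
    DomFrom r₀ (ENNReal.ofReal b) = Ico r₀ b := by
  ext r
  simp only [DomFrom, mem_setOf_eq, mem_Ico]
  exact and_congr_right fun _ => ENNReal.ofReal_lt_ofReal_iff hb

/-- If `φ' > 0`, `φ'' ≥ 0` and `φ'` has at most linear growth
(`φ'(t) ≤ c·t` for `t ≥ K`), then any rightward-maximal solution of the rotational
`[φ,e₃]`-minimal equation with `0 < u' < r·φ'(u)` is defined for all `r ≥ r₀`,
i.e. `ω₊ = +∞`. -/
theorem stmt_14 (a : EReal) (φ φ' φ'' : ℝ → ℝ)
    (hφsm : ContDiffOn ℝ (⊤ : ℕ∞) φ {t : ℝ | a < (t : EReal)})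
    (hφd : ∀ t : ℝ, a < (t : EReal) → HasDerivAt φ (φ' t) t)
    (hφd2 : ∀ t : ℝ, a < (t : EReal) → HasDerivAt φ' (φ'' t) t)
    (hφ'pos : ∀ t : ℝ, a < (t : EReal) → 0 < φ' t)
    (hφ''nn : ∀ t : ℝ, a < (t : EReal) → 0 ≤ φ'' t)
    -- at most linear growth of `φ'`
    (c K : ℝ) (hc : 0 < c) (hKa : a < (K : EReal)) (hK0 : 0 < K)
    (hlin : ∀ t : ℝ, K ≤ t → φ' t ≤ c * t)
    (r₀ : ℝ) (hr₀ : 0 ≤ r₀)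
    (ω : ℝ≥0∞) (hωr₀ : ENNReal.ofReal r₀ < ω)
    (u u' : ℝ → ℝ)
    (hmem : ∀ r ∈ DomFrom r₀ ω, a < (u r : EReal))
    (hd : ∀ r ∈ DomFrom r₀ ω, HasDerivWithinAt u (u' r) (DomFrom r₀ ω) r)
    (hu'c : ContinuousOn u' (DomFrom r₀ ω))
    (heq : ∀ r ∈ DomFrom r₀ ω, r₀ < r →
      HasDerivAt u' ((1 + u' r ^ 2) * (φ' (u r) - u' r / r)) r)
    (hu'pos : ∀ r ∈ DomFrom r₀ ω, r₀ < r → 0 < u' r)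
    (hu'lt : ∀ r ∈ DomFrom r₀ ω, r₀ < r → u' r < r * φ' (u r))
    -- maximality to the right: no solution with the same data at `r₀` on a larger interval
    (hmax : ∀ ω' : ℝ≥0∞, ω < ω' →
      ¬ ∃ v v' : ℝ → ℝ,
        v r₀ = u r₀ ∧ v' r₀ = u' r₀ ∧
        (∀ r ∈ DomFrom r₀ ω', a < (v r : EReal)) ∧
        (∀ r ∈ DomFrom r₀ ω', HasDerivWithinAt v (v' r) (DomFrom r₀ ω') r) ∧
        ContinuousOn v' (DomFrom r₀ ω') ∧
        (∀ r ∈ DomFrom r₀ ω', r₀ < r →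
          HasDerivAt v' ((1 + v' r ^ 2) * (φ' (v r) - v' r / r)) r)) :
    ω = ⊤ := by

  by_contra hω
  set S : Set ℝ := {t : ℝ | a < (t : EReal)} with hS
  have hSo : IsOpen S := isOpen_Ioi.preimage continuous_coe_real_ereal
  have hSup : ∀ ⦃s t : ℝ⦄, s ∈ S → s ≤ t → t ∈ S := fun s t hs hst =>
    lt_of_lt_of_le hs (EReal.coe_le_coe_iff.2 hst)
  have hφ'C : ContDiffOn ℝ 1 φ' S := by
    have h1 : ContDiffOn ℝ 1 (deriv φ) S := hφsm.deriv_of_isOpen hSo (by exact WithTop.coe_le_coe.2 le_top)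
    exact h1.congr fun x hx => ((hφd x hx).deriv).symm
  have hconv : Convex ℝ S := by
    apply convex_iff_ordConnected.mpr
    constructor
    intro x hx y hy z hz
    exact hSup hx hz.1
  have hφ'mono : ∀ s ∈ S, ∀ t, s ≤ t → φ' s ≤ φ' t := by
    intro s hs t hst
    have hmono : MonotoneOn φ' S := by
      apply monotoneOn_of_deriv_nonneg hconv
      · exact fun x hx => (hφd2 x hx).continuousAt.continuousWithinAt
      · intro x hx
        have hx' : x ∈ S := interior_subset hx
        exact (hφd2 x hx').differentiableAt.differentiableWithinAt
      · intro x hx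
        have hx' : x ∈ S := interior_subset hx
        rw [(hφd2 x hx').deriv]
        exact hφ''nn x hx'
    exact hmono hs (hSup hs hst) hst
  set b : ℝ := ω.toReal with hbdef
  have hωb : ω = ENNReal.ofReal b := by rw [hbdef, ENNReal.ofReal_toReal hω]
  have hb0 : 0 < b := by
    rcases le_or_gt b 0 with h | h
    · rw [hωb] at hωr₀
      rw [ENNReal.ofReal_eq_zero.2 h] at hωr₀
      exact absurd hωr₀ (by simp)
    · exact h
  have hrb : r₀ < b := by
    rw [hωb] at hωr₀
    exact (ENNReal.ofReal_lt_ofReal_iff hb0).1 hωr₀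
  have hdom : DomFrom r₀ ω = Ico r₀ b := by rw [hωb]; exact DomFrom_eq hb0
  rw [hdom] at hmem hd hu'c heq hu'pos hu'lt
  obtain ⟨b', hbb', v, v', h1, h2, h3, h4, h5, h6⟩ :=
    extend_sol φ' S hSo hSup hφ'C (fun t ht => hφ'pos t ht) hφ'mono c K hc hKa hK0 hlin
      r₀ b hr₀ hrb u u' hmem hd hu'c
      (fun r hr => heq r ⟨hr.1.le, hr.2⟩ hr.1)
      (fun r hr => hu'pos r ⟨hr.1.le, hr.2⟩ hr.1)
      (fun r hr => hu'lt r ⟨hr.1.le, hr.2⟩ hr.1)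
  have hb'0 : 0 < b' := lt_trans hb0 hbb'
  have hdom' : DomFrom r₀ (ENNReal.ofReal b') = Ico r₀ b' := DomFrom_eq hb'0
  apply hmax (ENNReal.ofReal b')
    (by rw [hωb]; exact (ENNReal.ofReal_lt_ofReal_iff hb'0).2 hbb')
  refine ⟨v, v', h1, h2, ?_, ?_, ?_, ?_⟩
  · rw [hdom']; exact h3
  · rw [hdom']; exact h4
  · rw [hdom']; exact h5
  · rw [hdom']
    intro r hr hrr
    exact h6 r ⟨hrr, hr.2⟩
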